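/- arXiv:2402.01022 — 4 statements merged into one kernel-verified Lean document; each statement's English description precedes it below -/
import Mathlib

section
/- Let A be a unital C*-algebra and let a_1, ..., a_n be self-adjoint elements of A. Then the left ideal generated by a_1, ..., a_n is all of A if and only if the element a_1^2 + ... + a_n^2 is invertible in A. -/
open Filter Topology MultiplierAlgebra

noncomputable section

/-- Real rank at most `n` for a unital normed star ring: unimodular self-adjoint
`(n+1)`-tuples are dense in the self-adjoint `(n+1)`-tuples. -/
def RealRankLe (A : Type*) [NormedRing A] [StarRing A] (n : ℕ) : Prop :=
  ∀ (a : Fin (n + 1) → A), (∀ i, IsSelfAdjoint (a i)) → ∀ ε > 0,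
    ∃ b : Fin (n + 1) → A, (∀ i, IsSelfAdjoint (b i)) ∧
      IsUnit (∑ i, b i ^ 2) ∧ ∀ i, ‖a i - b i‖ < ε

/-- The real rank of a unital normed star ring, as an element of `ℕ∞`. -/
def unitalRealRank (A : Type*) [NormedRing A] [StarRing A] : ℕ∞ :=
  sInf {n : ℕ∞ | ∃ m : ℕ, n = m ∧ RealRankLe A m}

/-- The real rank of a (possibly nonunital) C*-algebra: the real rank of its
minimal unitization. -/
def realRank (A : Type*) [NonUnitalCStarAlgebra A] : ℕ∞ :=
  unitalRealRank (Unitization ℂ A)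

/-- A sequential two-sided approximate unit. -/
def IsApproxUnit {E : Type*} [NonUnitalNormedRing E] (u : ℕ → E) : Prop :=
  ∀ x : E, Tendsto (fun k => u k * x) atTop (𝓝 x) ∧ Tendsto (fun k => x * u k) atTop (𝓝 x)

/-- A C*-algebra is σ-unital if it has a countable (sequential) approximate unit. -/
def SigmaUnital (E : Type*) [NonUnitalNormedRing E] : Prop :=
  ∃ u : ℕ → E, IsApproxUnit u

variable (A : Type*) [NonUnitalCStarAlgebra A]

/-- The canonical image of `A` in its multiplier algebra `𝓜(ℂ, A)`. -/
def multIdeal : Set 𝓜(ℂ, A) := Set.range (DoubleCentralizer.coeHom (𝕜 := ℂ) (A := A))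

/-- Property `(Λ_n)` of Thiel: tuples in the multiplier algebra that are unimodular
modulo `A` can be approximated by unimodular tuples agreeing with them modulo `A`. -/
def LambdaProp (n : ℕ) : Prop :=
  ∀ a : Fin (n + 1) → 𝓜(ℂ, A), (∀ i, IsSelfAdjoint (a i)) →
    (∃ z : 𝓜(ℂ, A), z * (∑ i, a i ^ 2) - 1 ∈ multIdeal A ∧
      (∑ i, a i ^ 2) * z - 1 ∈ multIdeal A) →
    ∀ ε > 0, ∃ b : Fin (n + 1) → 𝓜(ℂ, A), (∀ i, IsSelfAdjoint (b i)) ∧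
      IsUnit (∑ i, b i ^ 2) ∧ ∀ i, ‖a i - b i‖ < ε ∧ a i - b i ∈ multIdeal A

/-- The extension real rank `xrr(A)` of a C*-algebra `A`. -/
def extRealRank : ℕ∞ :=
  sInf {n : ℕ∞ | ∃ m : ℕ, n = m ∧ ∀ k, m ≤ k → LambdaProp A k}

/-- Real rank at most `n` for the corona algebra `M(A)/A`, formulated intrinsically in
`M(A)` using the quotient norm (`Metric.infDist` to the ideal) and invertibility modulo
the ideal. -/
def CoronaRealRankLe (n : ℕ) : Prop :=
  ∀ a : Fin (n + 1) → 𝓜(ℂ, A), (∀ i, IsSelfAdjoint (a i)) → ∀ ε > 0,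
    ∃ b : Fin (n + 1) → 𝓜(ℂ, A), (∀ i, IsSelfAdjoint (b i)) ∧
      (∃ z : 𝓜(ℂ, A), z * (∑ i, b i ^ 2) - 1 ∈ multIdeal A ∧
        (∑ i, b i ^ 2) * z - 1 ∈ multIdeal A) ∧
      ∀ i, Metric.infDist (a i - b i) (multIdeal A) < ε

/-- The real rank of the corona algebra `M(A)/A`. -/
def coronaRealRank : ℕ∞ :=
  sInf {n : ℕ∞ | ∃ m : ℕ, n = m ∧ CoronaRealRankLe A m}

/-- `u`, a unitary `n × n` matrix, padded by `1`s to a `k × k` matrix. -/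
def padTo {B : Type*} [Ring B] {n : ℕ} (u : Matrix (Fin n) (Fin n) B) (k : ℕ)
    (h : n ≤ k) : Matrix (Fin k) (Fin k) B :=
  Matrix.reindex (finSumFinEquiv.trans (finCongr (Nat.add_sub_cancel' h)))
    (finSumFinEquiv.trans (finCongr (Nat.add_sub_cancel' h)))
    (Matrix.fromBlocks u 0 0 1)

/-- Triviality of the K₁-group of a C*-algebra, formulated concretely: every unitary
matrix over the unitization becomes connected to the identity through unitaries after
padding by `1`s. -/
def K1Trivial : Prop :=
  ∀ (n : ℕ) (u : Matrix (Fin n) (Fin n) (Unitization ℂ A)),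
    u ∈ unitary (Matrix (Fin n) (Fin n) (Unitization ℂ A)) →
    ∃ (k : ℕ) (h : n ≤ k),
      JoinedIn {w | w ∈ unitary (Matrix (Fin k) (Fin k) (Unitization ℂ A))}
        (padTo u k h) 1

end

/-- In a unital C*-algebra, a self-adjoint tuple generates `A` as a left
ideal if and only if the sum of the squares of its entries is invertible. -/
theorem selfAdjoint_span_eq_top_iff_isUnit_sum_sq {A : Type*} [CStarAlgebra A] {n : ℕ}
    (a : Fin n → A) (ha : ∀ i, IsSelfAdjoint (a i)) :
    Submodule.span A (Set.range a) = ⊤ ↔ IsUnit (∑ i, a i ^ 2) := by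
  constructor
  · intro h
    letI := CStarAlgebra.spectralOrder A
    haveI := CStarAlgebra.spectralOrderedRing A
    have h1 : (1 : A) ∈ Submodule.span A (Set.range a) := h ▸ Submodule.mem_top
    rw [Submodule.mem_span_range_iff_exists_fun A] at h1
    obtain ⟨c, hc⟩ := h1
    simp only [smul_eq_mul] at hc
    set t : A := ∑ i, c i * star (c i) with ht
    have htsa : IsSelfAdjoint t := by
      simp only [ht, IsSelfAdjoint, star_sum, star_mul, star_star]
    have htle : t ≤ algebraMap ℝ A ‖t‖ := htsa.le_algebraMap_norm_self
    set μ : ℝ := (‖t‖ + 1)⁻¹ with hμ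
    have hμpos : 0 < μ := by positivity
    have key : (0 : A) ≤ ∑ i, a i ^ 2 - (2 * μ) • 1 + (μ * μ) • t := by
      have h0 : (0 : A) ≤ ∑ i, star (a i - μ • star (c i)) * (a i - μ • star (c i)) :=
        Finset.sum_nonneg fun i _ => star_mul_self_nonneg _
      have hX : ∑ i, a i * star (c i) = 1 := by
        have := congrArg star hc
        simpa [star_sum, star_mul, (ha _).star_eq] using this
      calc (0:A) ≤ ∑ i, star (a i - μ • star (c i)) * (a i - μ • star (c i)) := h0
        _ = ∑ i, a i ^ 2 - (2 * μ) • 1 + (μ * μ) • t := by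
            simp only [star_sub, star_smul, star_star, (ha _).star_eq, star_trivial,
              sub_mul, mul_sub, smul_mul_assoc, mul_smul_comm, smul_smul]
            simp only [Finset.sum_sub_distrib, ← Finset.smul_sum, smul_sub, hc, hX, ← ht, pow_two]
            module
    set ε : ℝ := 2 * μ - μ * μ * ‖t‖ with hε
    have hεpos : 0 < ε := by
      have h1 : μ * (‖t‖ + 1) = 1 := inv_mul_cancel₀ (by positivity)
      have h2 : (0:ℝ) ≤ ‖t‖ := norm_nonneg _
      nlinarith
    have hle : algebraMap ℝ A ε ≤ ∑ i, a i ^ 2 := by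
      have h2 : (μ * μ) • t ≤ (μ * μ) • (algebraMap ℝ A ‖t‖) :=
        smul_le_smul_of_nonneg_left htle (by positivity)
      have h3 : (2 * μ) • (1:A) - (μ * μ) • t ≤ ∑ i, a i ^ 2 := by
        have := key
        rw [← sub_nonneg]
        convert key using 1
        abel
      calc algebraMap ℝ A ε = (2 * μ) • (1:A) - (μ * μ) • (algebraMap ℝ A ‖t‖) := by
            rw [Algebra.algebraMap_eq_smul_one, Algebra.algebraMap_eq_smul_one, smul_smul, hε,
              sub_smul, mul_assoc]
        _ ≤ (2 * μ) • (1:A) - (μ * μ) • t := by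
            exact sub_le_sub_left h2 _
        _ ≤ ∑ i, a i ^ 2 := h3
    exact CStarAlgebra.isUnit_of_le _ hle
      (((isUnit_iff_ne_zero.2 hεpos.ne').map (algebraMap ℝ A)).isStrictlyPositive
      (by rw [Algebra.algebraMap_eq_smul_one]; exact smul_nonneg hεpos.le zero_le_one))
  · intro h
    obtain ⟨u, hu⟩ := h
    have hmem : (∑ i, a i ^ 2) ∈ Submodule.span A (Set.range a) := by
      refine Submodule.sum_mem _ fun i _ => ?_
      rw [sq, ← smul_eq_mul]
      exact Submodule.smul_mem _ _ (Submodule.subset_span ⟨i, rfl⟩)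
    have h1 : (1 : A) ∈ Submodule.span A (Set.range a) := by
      have := Submodule.smul_mem _ ((u⁻¹ : Aˣ) : A) hmem
      rwa [smul_eq_mul, ← hu, Units.inv_mul] at this
    rw [Submodule.eq_top_iff']
    intro x
    simpa using Submodule.smul_mem _ x h1
end

section
/- Let E be a C*-algebra, A a closed two-sided ideal of E, and set J = A** ∩ M(E) inside E**. Then J is contained in the multiplier algebra M(A), and J is a hereditary sub-C*-algebra of M(A): for all x, y ∈ J and z ∈ M(A), the element xzy belongs to J. -/
open Filter Topology MultiplierAlgebra

/-- With `W = E**`, `AW = A**` a two-sided ideal of `W`, `A = E ∩ AW`, the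
set `J = AW ∩ M(E)` (where `M(E) = {x : xE + Ex ⊆ E}`) is contained in
`M(A) = {x ∈ AW : xA + Ax ⊆ A}` and is a hereditary subalgebra of `M(A)`. -/
theorem bidual_inter_multiplier_hereditary {W : Type*} [CStarAlgebra W] (E A AW : Set W)
    (hEmul : ∀ x ∈ E, ∀ y ∈ E, x * y ∈ E) (hEadd : ∀ x ∈ E, ∀ y ∈ E, x + y ∈ E)
    (hEstar : ∀ x ∈ E, star x ∈ E) (hEclosed : IsClosed E)
    (hAWclosed : IsClosed AW) (hAWstar : ∀ x ∈ AW, star x ∈ AW)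
    (hAWadd : ∀ x ∈ AW, ∀ y ∈ AW, x + y ∈ AW)
    (hAW : ∀ x ∈ AW, ∀ w : W, x * w ∈ AW ∧ w * x ∈ AW)
    (hA : A = E ∩ AW) :
    {x ∈ AW | ∀ e ∈ E, x * e ∈ E ∧ e * x ∈ E} ⊆
        {x ∈ AW | ∀ a ∈ A, x * a ∈ A ∧ a * x ∈ A} ∧
      ∀ x ∈ {x ∈ AW | ∀ e ∈ E, x * e ∈ E ∧ e * x ∈ E},
        ∀ z ∈ {x ∈ AW | ∀ a ∈ A, x * a ∈ A ∧ a * x ∈ A},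
          ∀ y ∈ {x ∈ AW | ∀ e ∈ E, x * e ∈ E ∧ e * x ∈ E},
            x * z * y ∈ {x ∈ AW | ∀ e ∈ E, x * e ∈ E ∧ e * x ∈ E} := by
  subst hA
  constructor
  · rintro x ⟨hxAW, hx⟩
    exact ⟨hxAW, fun a ⟨haE, haAW⟩ =>
      ⟨⟨(hx a haE).1, (hAW x hxAW a).1⟩, ⟨(hx a haE).2, (hAW x hxAW a).2⟩⟩⟩
  · rintro x ⟨hxAW, hx⟩ z ⟨hzAW, hz⟩ y ⟨hyAW, hy⟩
    refine ⟨by rw [mul_assoc]; exact (hAW x hxAW (z * y)).1, fun e he => ?_⟩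
    constructor
    · have hye : y * e ∈ E ∩ AW := ⟨(hy e he).1, (hAW y hyAW e).1⟩
      have hzye : z * (y * e) ∈ E ∩ AW := (hz _ hye).1
      have h := (hx _ hzye.1).1
      simpa only [mul_assoc] using h
    · have hex : e * x ∈ E ∩ AW := ⟨(hx e he).2, (hAW x hxAW e).2⟩
      have hexz : (e * x) * z ∈ E ∩ AW := (hz _ hex).2
      have h := (hy _ hexz.1).2
      simpa only [mul_assoc] using h
end

section
/- Let E be a σ-unital C*-algebra and let L ⊆ M(E) be a separable sub-C*-algebra of the multiplier algebra of E. Then there exists a separable sub-C*-algebra D ⊆ E containing an approximate unit for E such that every element of L multiplies D into D, i.e., L ⊆ { x ∈ M(E) : xD + Dx ⊆ D }. -/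
open Filter Topology MultiplierAlgebra

section Aux

variable {E : Type*} [NonUnitalCStarAlgebra E]

lemma aux_left_cancel {y z : E} (h : ∀ c : E, c * y = c * z) : y = z := by
  have h2 := h (star (y - z))
  have h3 : star (y - z) * (y - z) = 0 := by rw [mul_sub, h2, sub_self]
  rw [CStarRing.star_mul_self_eq_zero_iff] at h3
  exact sub_eq_zero.mp h3

lemma aux_right_cancel {y z : E} (h : ∀ c : E, y * c = z * c) : y = z := by
  have h2 := h (star (y - z))
  have h3 : (y - z) * star (y - z) = 0 := by rw [sub_mul, h2, sub_self]
  rw [CStarRing.mul_star_self_eq_zero_iff] at h3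
  exact sub_eq_zero.mp h3

lemma aux_fst_mul (x : 𝓜(ℂ, E)) (a b : E) : x.fst (a * b) = x.fst a * b := by
  apply aux_left_cancel (fun c => ?_)
  calc c * x.fst (a * b) = x.snd c * (a * b) := (x.central c (a * b)).symm
    _ = (x.snd c * a) * b := (mul_assoc _ _ _).symm
    _ = (c * x.fst a) * b := by rw [x.central]
    _ = c * (x.fst a * b) := mul_assoc _ _ _

lemma aux_snd_mul (x : 𝓜(ℂ, E)) (a b : E) : x.snd (b * a) = b * x.snd a := by
  apply aux_right_cancel (fun c => ?_)
  calc x.snd (b * a) * c = (b * a) * x.fst c := x.central _ _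
    _ = b * (a * x.fst c) := mul_assoc _ _ _
    _ = b * (x.snd a * c) := by rw [x.central]
    _ = (b * x.snd a) * c := (mul_assoc _ _ _).symm

lemma aux_mul_coe (x : 𝓜(ℂ, E)) (a : E) :
    x * (DoubleCentralizer.coeHom (𝕜 := ℂ) (A := E) a)
      = DoubleCentralizer.coeHom (𝕜 := ℂ) (A := E) (x.fst a) := by
  apply DoubleCentralizer.ext
  refine Prod.ext ?_ ?_ <;> refine ContinuousLinearMap.ext fun b => ?_
  · show (x * (a : 𝓜(ℂ, E))).fst b = ((x.fst a : E) : 𝓜(ℂ, E)).fst b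
    rw [DoubleCentralizer.mul_fst]
    show x.fst (a * b) = x.fst a * b
    exact aux_fst_mul x a b
  · show (x * (a : 𝓜(ℂ, E))).snd b = ((x.fst a : E) : 𝓜(ℂ, E)).snd b
    rw [DoubleCentralizer.mul_snd]
    show x.snd b * a = b * x.fst a
    exact x.central b a

lemma aux_coe_mul (x : 𝓜(ℂ, E)) (a : E) :
    (DoubleCentralizer.coeHom (𝕜 := ℂ) (A := E) a) * x
      = DoubleCentralizer.coeHom (𝕜 := ℂ) (A := E) (x.snd a) := by
  apply DoubleCentralizer.ext
  refine Prod.ext ?_ ?_ <;> refine ContinuousLinearMap.ext fun b => ?_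
  · show ((a : 𝓜(ℂ, E)) * x).fst b = ((x.snd a : E) : 𝓜(ℂ, E)).fst b
    rw [DoubleCentralizer.mul_fst]
    show a * x.fst b = x.snd a * b
    exact (x.central a b).symm
  · show ((a : 𝓜(ℂ, E)) * x).snd b = ((x.snd a : E) : 𝓜(ℂ, E)).snd b
    rw [DoubleCentralizer.mul_snd]
    show x.snd (b * a) = b * x.snd a
    exact aux_snd_mul x a b

lemma aux_fst_lip : LipschitzWith 1 (fun x : 𝓜(ℂ, E) => x.fst) := by
  apply LipschitzWith.of_dist_le_mul
  intro x y
  rw [dist_eq_norm, dist_eq_norm, ← DoubleCentralizer.sub_fst, DoubleCentralizer.norm_fst,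
    NNReal.coe_one, one_mul]

lemma aux_snd_lip : LipschitzWith 1 (fun x : 𝓜(ℂ, E) => x.snd) := by
  apply LipschitzWith.of_dist_le_mul
  intro x y
  rw [dist_eq_norm, dist_eq_norm, ← DoubleCentralizer.sub_snd, DoubleCentralizer.norm_snd,
    NNReal.coe_one, one_mul]

lemma aux_cont_fst : Continuous (Function.uncurry (fun (x : 𝓜(ℂ, E)) (d : E) => x.fst d)) := by
  have : Function.uncurry (fun (x : 𝓜(ℂ, E)) (d : E) => x.fst d)
      = (fun p : (E →L[ℂ] E) × E => p.1 p.2) ∘ (fun p : 𝓜(ℂ, E) × E => (p.1.fst, p.2)) := rfl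
  rw [this]
  exact isBoundedBilinearMap_apply.continuous.comp
    ((aux_fst_lip.continuous.comp continuous_fst).prodMk continuous_snd)

lemma aux_cont_snd : Continuous (Function.uncurry (fun (x : 𝓜(ℂ, E)) (d : E) => x.snd d)) := by
  have : Function.uncurry (fun (x : 𝓜(ℂ, E)) (d : E) => x.snd d)
      = (fun p : (E →L[ℂ] E) × E => p.1 p.2) ∘ (fun p : 𝓜(ℂ, E) × E => (p.1.snd, p.2)) := rfl
  rw [this]
  exact isBoundedBilinearMap_apply.continuous.comp
    ((aux_snd_lip.continuous.comp continuous_fst).prodMk continuous_snd)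

end Aux
section Gen

variable {E : Type*} [NonUnitalCStarAlgebra E]

/-- One step of closing a subset of `E` under the algebraic operations and the action of
the countable sets `T ⊆ 𝓜(ℂ, E)` and `Q ⊆ ℂ`. -/
def auxStep (T : Set 𝓜(ℂ, E)) (Q : Set ℂ) (s : Set E) : Set E :=
  s ∪ Set.image2 (· + ·) s s ∪ Set.image2 (· * ·) s s ∪ (star '' s) ∪
    Set.image2 (· • ·) Q s ∪ Set.image2 (fun (x : 𝓜(ℂ, E)) (d : E) => x.fst d) T s ∪
    Set.image2 (fun (x : 𝓜(ℂ, E)) (d : E) => x.snd d) T s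

lemma auxStep_subset (T : Set 𝓜(ℂ, E)) (Q : Set ℂ) (s : Set E) : s ⊆ auxStep T Q s := by
  intro a ha
  exact Or.inl (Or.inl (Or.inl (Or.inl (Or.inl (Or.inl ha)))))

lemma auxStep_countable {T : Set 𝓜(ℂ, E)} {Q : Set ℂ} {s : Set E}
    (hT : T.Countable) (hQ : Q.Countable) (hs : s.Countable) : (auxStep T Q s).Countable := by
  unfold auxStep
  repeat apply Set.Countable.union
  all_goals
    first
      | exact hs
      | exact hs.image2 hs _
      | exact hs.image _
      | exact hQ.image2 hs _
      | exact hT.image2 hs _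

/-- The set generated by `s0` under the operations. -/
def auxGen (T : Set 𝓜(ℂ, E)) (Q : Set ℂ) (s0 : Set E) : Set E :=
  ⋃ n, (auxStep T Q)^[n] s0

lemma auxGen_countable {T : Set 𝓜(ℂ, E)} {Q : Set ℂ} {s0 : Set E}
    (hT : T.Countable) (hQ : Q.Countable) (hs : s0.Countable) : (auxGen T Q s0).Countable := by
  refine Set.countable_iUnion fun n => ?_
  induction n with
  | zero => simpa using hs
  | succ k ih => rw [Function.iterate_succ_apply']; exact auxStep_countable hT hQ ih

lemma auxGen_mem_iff {T : Set 𝓜(ℂ, E)} {Q : Set ℂ} {s0 : Set E} {a : E} :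
    a ∈ auxGen T Q s0 ↔ ∃ n, a ∈ (auxStep T Q)^[n] s0 := Set.mem_iUnion

lemma auxIter_mono {T : Set 𝓜(ℂ, E)} {Q : Set ℂ} {s0 : Set E} {m n : ℕ} (h : m ≤ n) :
    (auxStep T Q)^[m] s0 ⊆ (auxStep T Q)^[n] s0 := by
  induction n with
  | zero => simpa [Nat.le_zero.mp h] using subset_rfl
  | succ k ih =>
    rcases Nat.lt_or_ge m (k+1) with hlt | hge
    · rw [Function.iterate_succ_apply']
      exact (ih (Nat.lt_succ_iff.mp hlt)).trans (auxStep_subset _ _ _)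
    · have : m = k + 1 := le_antisymm h hge
      subst this; exact subset_rfl

lemma auxGen_binop {T : Set 𝓜(ℂ, E)} {Q : Set ℂ} {s0 : Set E} {a b : E}
    (ha : a ∈ auxGen T Q s0) (hb : b ∈ auxGen T Q s0)
    (f : E → E → E)
    (hf : ∀ s : Set E, ∀ x ∈ s, ∀ y ∈ s, f x y ∈ auxStep T Q s) :
    f a b ∈ auxGen T Q s0 := by
  rcases auxGen_mem_iff.mp ha with ⟨m, hm⟩
  rcases auxGen_mem_iff.mp hb with ⟨n, hn⟩
  refine auxGen_mem_iff.mpr ⟨max m n + 1, ?_⟩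
  rw [Function.iterate_succ_apply']
  exact hf _ _ (auxIter_mono (le_max_left m n) hm) _ (auxIter_mono (le_max_right m n) hn)

lemma auxGen_add {T : Set 𝓜(ℂ, E)} {Q : Set ℂ} {s0 : Set E} {a b : E}
    (ha : a ∈ auxGen T Q s0) (hb : b ∈ auxGen T Q s0) : a + b ∈ auxGen T Q s0 :=
  auxGen_binop ha hb _ (fun s x hx y hy =>
    Or.inl (Or.inl (Or.inl (Or.inl (Or.inl (Or.inr ⟨x, hx, y, hy, rfl⟩))))))

lemma auxGen_mul {T : Set 𝓜(ℂ, E)} {Q : Set ℂ} {s0 : Set E} {a b : E}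
    (ha : a ∈ auxGen T Q s0) (hb : b ∈ auxGen T Q s0) : a * b ∈ auxGen T Q s0 :=
  auxGen_binop ha hb _ (fun s x hx y hy =>
    Or.inl (Or.inl (Or.inl (Or.inl (Or.inr ⟨x, hx, y, hy, rfl⟩)))))

lemma auxGen_star {T : Set 𝓜(ℂ, E)} {Q : Set ℂ} {s0 : Set E} {a : E}
    (ha : a ∈ auxGen T Q s0) : star a ∈ auxGen T Q s0 := by
  rcases auxGen_mem_iff.mp ha with ⟨m, hm⟩
  refine auxGen_mem_iff.mpr ⟨m + 1, ?_⟩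
  rw [Function.iterate_succ_apply']
  exact Or.inl (Or.inl (Or.inl (Or.inr ⟨a, hm, rfl⟩)))

lemma auxGen_smul {T : Set 𝓜(ℂ, E)} {Q : Set ℂ} {s0 : Set E} {q : ℂ} {a : E}
    (hq : q ∈ Q) (ha : a ∈ auxGen T Q s0) : q • a ∈ auxGen T Q s0 := by
  rcases auxGen_mem_iff.mp ha with ⟨m, hm⟩
  refine auxGen_mem_iff.mpr ⟨m + 1, ?_⟩
  rw [Function.iterate_succ_apply']
  exact Or.inl (Or.inl (Or.inr ⟨q, hq, a, hm, rfl⟩))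

lemma auxGen_fst {T : Set 𝓜(ℂ, E)} {Q : Set ℂ} {s0 : Set E} {x : 𝓜(ℂ, E)} {a : E}
    (hx : x ∈ T) (ha : a ∈ auxGen T Q s0) : x.fst a ∈ auxGen T Q s0 := by
  rcases auxGen_mem_iff.mp ha with ⟨m, hm⟩
  refine auxGen_mem_iff.mpr ⟨m + 1, ?_⟩
  rw [Function.iterate_succ_apply']
  exact Or.inl (Or.inr ⟨x, hx, a, hm, rfl⟩)

lemma auxGen_snd {T : Set 𝓜(ℂ, E)} {Q : Set ℂ} {s0 : Set E} {x : 𝓜(ℂ, E)} {a : E}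
    (hx : x ∈ T) (ha : a ∈ auxGen T Q s0) : x.snd a ∈ auxGen T Q s0 := by
  rcases auxGen_mem_iff.mp ha with ⟨m, hm⟩
  refine auxGen_mem_iff.mpr ⟨m + 1, ?_⟩
  rw [Function.iterate_succ_apply']
  exact Or.inr ⟨x, hx, a, hm, rfl⟩

lemma auxGen_base {T : Set 𝓜(ℂ, E)} {Q : Set ℂ} {s0 : Set E} {a : E} (ha : a ∈ s0) :
    a ∈ auxGen T Q s0 :=
  auxGen_mem_iff.mpr ⟨0, ha⟩

end Gen

/-- Separable reduction for multiplier algebras: if `E` is σ-unital and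
`L ⊆ 𝓜(ℂ, E)` is a separable sub-C*-algebra, then there is a separable sub-C*-algebra
`D ⊆ E` containing an approximate unit for `E` such that every element of `L` multiplies
`D` into `D`. -/
theorem exists_separable_subalgebra_approxUnit {E : Type*} [NonUnitalCStarAlgebra E]
    (hσ : SigmaUnital E)
    (L : Set 𝓜(ℂ, E)) (hLsep : TopologicalSpace.IsSeparable L)
    (hLadd : ∀ x ∈ L, ∀ y ∈ L, x + y ∈ L) (hLmul : ∀ x ∈ L, ∀ y ∈ L, x * y ∈ L)
    (hLstar : ∀ x ∈ L, star x ∈ L) (hLsmul : ∀ (c : ℂ), ∀ x ∈ L, c • x ∈ L)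
    (hLclosed : IsClosed L) :
    ∃ D : Set E, TopologicalSpace.IsSeparable D ∧ IsClosed D ∧
      (∀ x ∈ D, ∀ y ∈ D, x + y ∈ D ∧ x * y ∈ D) ∧ (∀ x ∈ D, star x ∈ D) ∧
      (∀ (c : ℂ), ∀ x ∈ D, c • x ∈ D) ∧
      (∃ u : ℕ → E, IsApproxUnit u ∧ ∀ n, u n ∈ D) ∧
      ∀ x ∈ L, ∀ d ∈ D,
        x * (DoubleCentralizer.coeHom (𝕜 := ℂ) (A := E) d) ∈
            (DoubleCentralizer.coeHom (𝕜 := ℂ) (A := E)) '' D ∧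
          (DoubleCentralizer.coeHom (𝕜 := ℂ) (A := E) d) * x ∈
            (DoubleCentralizer.coeHom (𝕜 := ℂ) (A := E)) '' D := by
  
  obtain ⟨u, hu⟩ := hσ
  obtain ⟨T, hTc, hLT⟩ := hLsep
  obtain ⟨Q, hQc, hQd⟩ := TopologicalSpace.exists_countable_dense ℂ
  set F : Set E := auxGen T Q (Set.range u) with hF
  refine ⟨closure F, ?_, isClosed_closure, ?_, ?_, ?_, ⟨u, hu, ?_⟩, ?_⟩
  · exact ((auxGen_countable hTc hQc (Set.countable_range u)).isSeparable).closure
  · intro x hx y hy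
    exact ⟨map_mem_closure₂ continuous_add hx hy fun a ha b hb => auxGen_add ha hb,
      map_mem_closure₂ continuous_mul hx hy fun a ha b hb => auxGen_mul ha hb⟩
  · intro x hx
    exact map_mem_closure continuous_star hx fun a ha => auxGen_star ha
  · intro c x hx
    exact map_mem_closure₂ continuous_smul (hQd c) hx fun q hq a ha => auxGen_smul hq ha
  · intro n
    exact subset_closure (auxGen_base (Set.mem_range_self n))
  · intro x hx d hd
    constructor
    · exact ⟨x.fst d,
        map_mem_closure₂ (f := fun (x : 𝓜(ℂ, E)) (d : E) => x.fst d) aux_cont_fst (hLT hx) hd (fun s hs a ha => auxGen_fst hs ha),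
        (aux_mul_coe x d).symm⟩
    · exact ⟨x.snd d,
        map_mem_closure₂ (f := fun (x : 𝓜(ℂ, E)) (d : E) => x.snd d) aux_cont_snd (hLT hx) hd (fun s hs a ha => auxGen_snd hs ha),
        (aux_coe_mul x d).symm⟩
end

section
/- Let A be a unital C*-algebra with real rank zero in the sense that invertible self-adjoint elements are dense in the self-adjoint part of A, and let p ∈ A be a projection. Then the corner pAp also has the property that invertible self-adjoint elements (invertible in pAp with unit p) are dense in the self-adjoint part of pAp. -/
open Filter Topology MultiplierAlgebra

set_option maxHeartbeats 1000000 in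
/-- If invertible self-adjoint elements are dense in `A_sa` (real rank
zero) and `p` is a projection, then self-adjoint elements of the corner `pAp` that are
invertible in `pAp` (with unit `p`) are dense in the self-adjoint part of `pAp`. -/
theorem corner_realRankZero {A : Type*} [CStarAlgebra A]
    (h : ∀ a : A, IsSelfAdjoint a → ∀ ε > 0,
      ∃ b : A, IsSelfAdjoint b ∧ IsUnit b ∧ ‖a - b‖ < ε)
    (p : A) (hpsa : IsSelfAdjoint p) (hp2 : p * p = p) :
    ∀ x : A, p * x * p = x → IsSelfAdjoint x → ∀ ε > 0,
      ∃ y : A, p * y * p = y ∧ IsSelfAdjoint y ∧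
        (∃ z : A, p * z * p = z ∧ y * z = p ∧ z * y = p) ∧ ‖x - y‖ < ε := by
  intro x hx hxsa ε hε
  set q : A := 1 - p with hqdef
  have hqsa : IsSelfAdjoint q := (IsSelfAdjoint.one (R := A)).sub hpsa
  have hpq : p * q = 0 := by simp [hqdef, mul_sub, hp2]
  have hqp : q * p = 0 := by simp [hqdef, sub_mul, hp2]
  have hq2 : q * q = q := by simp only [hqdef, mul_sub, sub_mul, hp2, mul_one, one_mul]; abel
  have hpq1 : p + q = 1 := by simp [hqdef]
  -- relations of x with p, q
  have hpx : p * x = x := by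
    conv_lhs => rw [← hx]
    rw [← mul_assoc, ← mul_assoc, hp2, hx]
  have hxp : x * p = x := by
    conv_lhs => rw [← hx]
    rw [mul_assoc, hp2, hx]
  have hqx : q * x = 0 := by rw [hqdef, sub_mul, one_mul, hpx, sub_self]
  have hxq : x * q = 0 := by rw [hqdef, mul_sub, mul_one, hxp, sub_self]
  -- norms of projections
  have hprojnorm : ∀ s : A, IsSelfAdjoint s → s * s = s → ‖s‖ ≤ 1 := by
    intro s hs h2
    have h3 : ‖s‖ * ‖s‖ = ‖s‖ := by
      rw [← CStarRing.norm_star_mul_self, hs.star_eq, h2]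
    nlinarith [norm_nonneg s]
  have hpn : ‖p‖ ≤ 1 := hprojnorm p hpsa hp2
  have hqn : ‖q‖ ≤ 1 := hprojnorm q hqsa hq2
  have hsand : ∀ s t u : A, ‖s‖ ≤ 1 → ‖u‖ ≤ 1 → ‖s * t * u‖ ≤ ‖t‖ := by
    intro s t u hs hu
    calc ‖s * t * u‖ ≤ ‖s * t‖ * ‖u‖ := norm_mul_le _ _
      _ ≤ (‖s‖ * ‖t‖) * ‖u‖ :=
        mul_le_mul_of_nonneg_right (norm_mul_le _ _) (norm_nonneg _)
      _ ≤ (1 * ‖t‖) * 1 := by gcongr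
      _ = ‖t‖ := by ring
  -- choose δ and apply density
  set δ : ℝ := min (ε / 2) (1 / 4) with hδdef
  have hδpos : 0 < δ := lt_min (by linarith) (by norm_num)
  have hδε : δ ≤ ε / 2 := min_le_left _ _
  have hδ4 : δ ≤ 1 / 4 := min_le_right _ _
  obtain ⟨b, hbsa, hbu, hab⟩ := h (x + q) (hxsa.add hqsa) δ hδpos
  set d : ℝ := ‖x + q - b‖ with hddef
  have hd : d < δ := hab
  have hd0 : 0 ≤ d := norm_nonneg _
  -- the perturbation r of q inside the corner qAq
  set r : A := q * b * q - q with hrdef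
  have hrval : q * (b - (x + q)) * q = r := by
    have e : q * (b - (x + q)) * q = q * b * q - (q * x) * q - (q * q) * q := by noncomm_ring
    rw [e, hqx, zero_mul, sub_zero, hq2, hq2, hrdef]
  have hrnorm : ‖r‖ ≤ d := by
    rw [← hrval]
    calc ‖q * (b - (x + q)) * q‖ ≤ ‖b - (x + q)‖ := hsand _ _ _ hqn hqn
      _ = d := by rw [hddef, norm_sub_rev]
  have hrsmall : ‖-r‖ < 1 := by rw [norm_neg]; linarith
  have hqr : q * r = r := by
    have e : q * r = (q * q) * b * q - q * q := by rw [hrdef]; noncomm_ring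
    rw [e, hq2, hrdef]
  have hrq : r * q = r := by
    have e : r * q = q * b * (q * q) - q * q := by rw [hrdef]; noncomm_ring
    rw [e, hq2, hrdef]
  have hrsa : IsSelfAdjoint r := by
    rw [IsSelfAdjoint, hrdef, star_sub, star_mul, star_mul, hqsa.star_eq, hbsa.star_eq]
    noncomm_ring
  -- the unit 1 + r and its inverse
  set w : Aˣ := Units.oneSub (-r) hrsmall with hwdef
  have hwval : (w : A) = 1 + r := by rw [hwdef, Units.val_oneSub, sub_neg_eq_add]
  have hwcomm : Commute q (w : A) := by
    rw [hwval]; unfold Commute SemiconjBy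
    rw [mul_add, add_mul, mul_one, one_mul, hqr, hrq]
  have hwinvcomm : Commute q ((w⁻¹ : Aˣ) : A) := hwcomm.units_inv_right
  have hwsa : IsSelfAdjoint (w : A) := by
    rw [hwval]; exact (IsSelfAdjoint.one (R := A)).add hrsa
  have hwinvsa : IsSelfAdjoint ((w⁻¹ : Aˣ) : A) := by
    have h1 : star ((w⁻¹ : Aˣ) : A) * (w : A) = 1 := by
      rw [← hwsa.star_eq, ← star_mul, Units.mul_inv, star_one]
    calc star ((w⁻¹ : Aˣ) : A) = star ((w⁻¹ : Aˣ) : A) * ((w : A) * ((w⁻¹ : Aˣ) : A)) := by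
          rw [Units.mul_inv, mul_one]
      _ = (star ((w⁻¹ : Aˣ) : A) * (w : A)) * ((w⁻¹ : Aˣ) : A) := by rw [mul_assoc]
      _ = ((w⁻¹ : Aˣ) : A) := by rw [h1, one_mul]
  -- e is the inverse of q*b*q in the corner qAq
  set e : A := ((w⁻¹ : Aˣ) : A) * q with hedef
  have heq : e * q = e := by rw [hedef, mul_assoc, hq2]
  have hqe : q * e = e := by rw [hedef, ← mul_assoc, hwinvcomm.eq, mul_assoc, hq2]
  have hesa : IsSelfAdjoint e := by
    rw [IsSelfAdjoint, hedef, star_mul, hqsa.star_eq, hwinvsa.star_eq, hwinvcomm.eq]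
  have hqbq : q * b * q = r + q := by rw [hrdef]; abel
  have he1 : e * (q * b * q) = q := by
    have h2 : q * (r + q) = (w : A) * q := by
      have l : q * (r + q) = r + q := by rw [mul_add, hqr, hq2]
      have rr : (w : A) * q = q + r * q := by rw [hwval, add_mul, one_mul]
      rw [l, rr, hrq]; abel
    rw [hqbq, hedef, mul_assoc, h2, ← mul_assoc, Units.inv_mul, one_mul]
  have he2 : (q * b * q) * e = q := by
    have h2 : (r + q) * ((w⁻¹ : Aˣ) : A) = ((w⁻¹ : Aˣ) : A) * (r + q) := by
      have hrr : Commute r (1 + r) := (Commute.one_right r).add_right (Commute.refl r)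
      have hqq : Commute q (1 + r) :=
        (Commute.one_right q).add_right (by unfold Commute SemiconjBy; rw [hqr, hrq])
      have : Commute (r + q) (w : A) := by rw [hwval]; exact hrr.add_left hqq
      exact (this.units_inv_right).eq
    rw [hqbq, hedef, ← mul_assoc, h2]
    have h3 : (r + q) * q = (w : A) * q := by
      have l : (r + q) * q = r + q := by rw [add_mul, hrq, hq2]
      have rr : (w : A) * q = q + r * q := by rw [hwval, add_mul, one_mul]
      rw [l, rr, hrq]; abel
    rw [mul_assoc, h3, ← mul_assoc, Units.inv_mul, one_mul]
  have hee : e = q - r * e := by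
    have h2 : (w : A) * e = q := by
      rw [hedef, ← mul_assoc, Units.mul_inv, one_mul]
    have h3 : e + r * e = q := by
      rw [← h2, hwval, add_mul, one_mul]
    exact (eq_sub_of_add_eq h3)
  have henorm : ‖e‖ ≤ 2 := by
    have h2 : ‖e‖ ≤ ‖q‖ + ‖r‖ * ‖e‖ := by
      calc ‖e‖ = ‖q - r * e‖ := by rw [← hee]
        _ ≤ ‖q‖ + ‖r * e‖ := norm_sub_le _ _
        _ ≤ ‖q‖ + ‖r‖ * ‖e‖ := by gcongr; exact norm_mul_le _ _
    nlinarith [norm_nonneg e, hrnorm, hd, hδ4]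
  -- inverse of b
  set c : A := ((hbu.unit⁻¹ : Aˣ) : A) with hcdef
  have hbc : b * c = 1 := by rw [hcdef]; exact hbu.mul_val_inv
  have hcb : c * b = 1 := by rw [hcdef]; exact hbu.val_inv_mul
  -- the Schur complement
  set y : A := p * b * p - p * b * q * e * (q * b * p) with hydef
  set z : A := p * c * p with hzdef
  -- algebraic identities
  have A1 : p * b * p * (p * c * p) + p * b * q * (q * c * p) = p := by
    have e1 : p * b * p * (p * c * p) + p * b * q * (q * c * p)
        = p * b * (p * p) * (c * p) + p * b * (q * q) * (c * p) := by noncomm_ring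
    rw [e1, hp2, hq2]
    have e2 : p * b * p * (c * p) + p * b * q * (c * p) = p * (b * c) * p := by
      rw [← add_mul]
      have : p * b * p + p * b * q = p * b * (p + q) := by noncomm_ring
      rw [this, hpq1, mul_one]; noncomm_ring
    rw [e2, hbc, mul_one, hp2]
  have A2 : q * b * p * (p * c * p) + q * b * q * (q * c * p) = 0 := by
    have e1 : q * b * p * (p * c * p) + q * b * q * (q * c * p)
        = q * b * (p * p) * (c * p) + q * b * (q * q) * (c * p) := by noncomm_ring
    rw [e1, hp2, hq2]
    have e2 : q * b * p * (c * p) + q * b * q * (c * p) = q * (b * c) * p := by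
      rw [← add_mul]
      have : q * b * p + q * b * q = q * b * (p + q) := by noncomm_ring
      rw [this, hpq1, mul_one]; noncomm_ring
    rw [e2, hbc, mul_one, hqp]
  have K1 : e * (q * b * p) * (p * c * p) = -(q * c * p) := by
    have hA2' : q * b * q * (q * c * p) = -(q * b * p * (p * c * p)) := by
      rw [eq_neg_iff_add_eq_zero, add_comm]; exact A2
    calc e * (q * b * p) * (p * c * p) = e * (q * b * (p * p) * (c * p)) := by noncomm_ring
      _ = e * (q * b * p * (c * p)) := by rw [hp2]
      _ = e * (q * b * p * (p * c * p)) := by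
          have : q * b * p * (c * p) = q * b * p * (p * c * p) := by
            have : q * b * p * (p * c * p) = q * b * (p * p) * (c * p) := by noncomm_ring
            rw [this, hp2]
          rw [this]
      _ = e * (-(q * b * q * (q * c * p))) := by rw [hA2', neg_neg]
      _ = -(e * (q * b * q) * (q * c * p)) := by noncomm_ring
      _ = -(q * (q * c * p)) := by rw [he1]
      _ = -((q * q) * (c * p)) := by noncomm_ring
      _ = -(q * c * p) := by rw [hq2]; noncomm_ring
  have hyz : y * z = p := by
    rw [hydef, hzdef]
    calc (p * b * p - p * b * q * e * (q * b * p)) * (p * c * p)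
        = p * b * p * (p * c * p) - p * b * q * (e * (q * b * p) * (p * c * p)) := by
          noncomm_ring
      _ = p * b * p * (p * c * p) - p * b * q * (-(q * c * p)) := by rw [K1]
      _ = p * b * p * (p * c * p) + p * b * q * (q * c * p) := by noncomm_ring
      _ = p := A1
  -- mirror identities
  have B1 : (p * c * p) * (p * b * p) + (p * c * q) * (q * b * p) = p := by
    have e1 : (p * c * p) * (p * b * p) + (p * c * q) * (q * b * p)
        = p * c * (p * p) * (b * p) + p * c * (q * q) * (b * p) := by noncomm_ring
    rw [e1, hp2, hq2]
    have e2 : p * c * p * (b * p) + p * c * q * (b * p) = p * (c * b) * p := by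
      rw [← add_mul]
      have : p * c * p + p * c * q = p * c * (p + q) := by noncomm_ring
      rw [this, hpq1, mul_one]; noncomm_ring
    rw [e2, hcb, mul_one, hp2]
  have B2 : (p * c * p) * (p * b * q) + (p * c * q) * (q * b * q) = 0 := by
    have e1 : (p * c * p) * (p * b * q) + (p * c * q) * (q * b * q)
        = p * c * (p * p) * (b * q) + p * c * (q * q) * (b * q) := by noncomm_ring
    rw [e1, hp2, hq2]
    have e2 : p * c * p * (b * q) + p * c * q * (b * q) = p * (c * b) * q := by
      rw [← add_mul]
      have : p * c * p + p * c * q = p * c * (p + q) := by noncomm_ring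
      rw [this, hpq1, mul_one]; noncomm_ring
    rw [e2, hcb, mul_one, hpq]
  have K2 : (p * c * p) * (p * b * q) * e = -(p * c * q) := by
    have hB2' : (p * c * q) * (q * b * q) = -((p * c * p) * (p * b * q)) := by
      rw [eq_neg_iff_add_eq_zero, add_comm]; exact B2
    calc (p * c * p) * (p * b * q) * e
        = (-((p * c * q) * (q * b * q))) * e := by rw [hB2', neg_neg]
      _ = -((p * c * q) * ((q * b * q) * e)) := by noncomm_ring
      _ = -((p * c * q) * q) := by rw [he2]
      _ = -(p * c * (q * q)) := by noncomm_ring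
      _ = -(p * c * q) := by rw [hq2]
  have hzy : z * y = p := by
    rw [hydef, hzdef]
    calc (p * c * p) * (p * b * p - p * b * q * e * (q * b * p))
        = (p * c * p) * (p * b * p) - ((p * c * p) * (p * b * q) * e) * (q * b * p) := by
          noncomm_ring
      _ = (p * c * p) * (p * b * p) - (-(p * c * q)) * (q * b * p) := by rw [K2]
      _ = (p * c * p) * (p * b * p) + (p * c * q) * (q * b * p) := by noncomm_ring
      _ = p := B1
  -- corner membership
  have hpyp : p * y * p = y := by
    rw [hydef]
    have e1 : p * (p * b * p - p * b * q * e * (q * b * p)) * p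
        = (p * p) * b * p * p - (p * p) * b * q * e * (q * b * (p * p)) := by noncomm_ring
    rw [e1, hp2]
    have e2 : p * b * p * p = p * b * (p * p) := by noncomm_ring
    rw [e2, hp2]
  have hpzp : p * z * p = z := by
    rw [hzdef]
    have e1 : p * (p * c * p) * p = (p * p) * c * (p * p) := by noncomm_ring
    rw [e1, hp2]
  -- self-adjointness of y
  have hysa : IsSelfAdjoint y := by
    rw [IsSelfAdjoint, hydef, star_sub]
    simp only [star_mul, hpsa.star_eq, hbsa.star_eq, hqsa.star_eq, hesa.star_eq]
    noncomm_ring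
  -- norm estimate
  have hn1 : ‖x - p * b * p‖ ≤ d := by
    have e1 : p * ((x + q) - b) * p = x - p * b * p := by
      have : p * ((x + q) - b) * p = p * x * p + (p * q) * p - p * b * p := by noncomm_ring
      rw [this, hx, hpq, zero_mul, add_zero]
    rw [← e1]
    calc ‖p * ((x + q) - b) * p‖ ≤ ‖(x + q) - b‖ := hsand _ _ _ hpn hpn
      _ = d := rfl
  have hn2 : ‖p * b * q‖ ≤ d := by
    have e1 : p * (b - (x + q)) * q = p * b * q := by
      have : p * (b - (x + q)) * q = p * b * q - (p * x) * q - p * (q * q) := by noncomm_ring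
      rw [this, hpx, hxq, hq2, hpq, sub_zero, sub_zero]
    rw [← e1]
    calc ‖p * (b - (x + q)) * q‖ ≤ ‖b - (x + q)‖ := hsand _ _ _ hpn hqn
      _ = d := by rw [hddef, norm_sub_rev]
  have hn3 : ‖q * b * p‖ ≤ d := by
    have e1 : q * (b - (x + q)) * p = q * b * p := by
      have : q * (b - (x + q)) * p = q * b * p - (q * x) * p - (q * q) * p := by noncomm_ring
      rw [this, hqx, zero_mul, hq2, hqp, sub_zero, sub_zero]
    rw [← e1]
    calc ‖q * (b - (x + q)) * p‖ ≤ ‖b - (x + q)‖ := hsand _ _ _ hqn hpn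
      _ = d := by rw [hddef, norm_sub_rev]
  have hn4 : ‖x - y‖ < ε := by
    have e1 : x - y = (x - p * b * p) + p * b * q * e * (q * b * p) := by
      rw [hydef]; abel
    have h5 : ‖p * b * q * e * (q * b * p)‖ ≤ d * 2 * d := by
      calc ‖p * b * q * e * (q * b * p)‖ ≤ ‖p * b * q * e‖ * ‖q * b * p‖ := norm_mul_le _ _
        _ ≤ (‖p * b * q‖ * ‖e‖) * ‖q * b * p‖ :=
          mul_le_mul_of_nonneg_right (norm_mul_le _ _) (norm_nonneg _)
        _ ≤ d * 2 * d := by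
          have h1 : ‖p * b * q‖ * ‖e‖ ≤ d * 2 := mul_le_mul hn2 henorm (norm_nonneg _) hd0
          exact mul_le_mul h1 hn3 (norm_nonneg _) (by linarith)
    have h6 : ‖x - y‖ ≤ d + d * 2 * d := by
      rw [e1]
      calc ‖(x - p * b * p) + p * b * q * e * (q * b * p)‖
          ≤ ‖x - p * b * p‖ + ‖p * b * q * e * (q * b * p)‖ := norm_add_le _ _
        _ ≤ d + d * 2 * d := add_le_add hn1 h5
    nlinarith [hd, hδε, hδ4, hd0, hε]
  exact ⟨y, hpyp, hysa, ⟨z, hpzp, hyz, hzy⟩, hn4⟩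
end
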